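/- Let ζ be a primitive p-th root of unity for a prime p, and let a be a nonzero ideal of the ring of integers of an imaginary quadratic field K with N(a) > 3 and gcd(a ∩ Z, 2) = 1. If the extension of a to Z[ζ] divides (ζ − 1)Z[ζ], then taking norms yields N(a)^{φ(p)/2} divides p; in particular no such p ∈ {2,3,5,7} exists. -/

import Mathlib

open NumberField IntermediateField

set_option synthInstance.maxHeartbeats 1000000 in
set_option maxHeartbeats 2000000 in
open Module in
/-- The absolute norm of an extended ideal is the `[L:K]`-th power of the norm. -/
theorem absNorm_map_algebraMap_ringOfIntegers (K L : Type*) [Field K] [NumberField K]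
    [Field L] [NumberField L] [Algebra K L] (a : Ideal (𝓞 K)) :
    Ideal.absNorm (Ideal.map (algebraMap (𝓞 K) (𝓞 L)) a) =
      Ideal.absNorm a ^ Module.finrank K L := by
  haveI : Module.Finite (𝓞 K) (𝓞 L) := Module.IsNoetherian.finite _ _
  have hinj : Function.Injective (algebraMap (𝓞 K) (𝓞 L)) :=
    FaithfulSMul.algebraMap_injective _ _
  have hn : Module.finrank K L ≠ 0 := Module.finrank_pos.ne'
  -- prime case
  have hprime : ∀ q : Ideal (𝓞 K), Prime q →
      Ideal.absNorm (Ideal.map (algebraMap (𝓞 K) (𝓞 L)) q) =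
        Ideal.absNorm q ^ Module.finrank K L := by
    intro q hq
    have hq0 : q ≠ ⊥ := hq.ne_zero
    haveI hqp : q.IsPrime := Ideal.isPrime_of_prime hq
    haveI : q.IsMaximal := hqp.isMaximal hq0
    have hmapne : Ideal.map (algebraMap (𝓞 K) (𝓞 L)) q ≠ ⊥ := by
      obtain ⟨x, hx, hx0⟩ := Submodule.exists_mem_ne_zero_of_ne_bot hq0
      intro h
      exact hx0 (hinj (by
        have : algebraMap (𝓞 K) (𝓞 L) x ∈ Ideal.map (algebraMap (𝓞 K) (𝓞 L)) q :=
          Ideal.mem_map_of_mem _ hx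
        rw [h, Ideal.mem_bot] at this
        simpa using this))
    letI : Field (𝓞 K ⧸ q) := Ideal.Quotient.field q
    letI : Fintype (𝓞 K ⧸ q) := @Fintype.ofFinite _ (Ideal.finiteQuotientOfFreeOfNeBot q hq0)
    letI : Fintype (𝓞 L ⧸ Ideal.map (algebraMap (𝓞 K) (𝓞 L)) q) :=
      @Fintype.ofFinite _ (Ideal.finiteQuotientOfFreeOfNeBot _ hmapne)
    have hcard := Module.card_eq_pow_finrank (K := 𝓞 K ⧸ q)
      (V := 𝓞 L ⧸ Ideal.map (algebraMap (𝓞 K) (𝓞 L)) q)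
    have hrank := Ideal.finrank_quotient_map (S := 𝓞 L) (K := K) q L
    rw [Ideal.absNorm_apply, Submodule.cardQuot_apply, Ideal.absNorm_apply,
      Submodule.cardQuot_apply, Nat.card_eq_fintype_card, Nat.card_eq_fintype_card,
      hcard, hrank]
  induction a using UniqueFactorizationMonoid.induction_on_prime with
  | h₁ =>
    simp [Ideal.zero_eq_bot, Ideal.absNorm_bot, zero_pow hn]
  | h₂ x hx =>
    simp [Ideal.isUnit_iff.mp hx, Ideal.map_top, Ideal.absNorm_top]
  | h₃ a q ha hq ih =>
    rw [Ideal.map_mul, _root_.map_mul, _root_.map_mul, ih, hprime q hq, mul_pow]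

/-- Let `ζ` be a primitive `p`-th root of unity (`p` prime) in the ring of integers
of a number field `L` with `[L : K] = φ(p)/2 = (p-1)/2`, where `K` is an imaginary
quadratic field, and let `a` be a nonzero ideal of `𝓞 K` with `N(a) > 3` and
`a ∩ ℤ` coprime to `2`.  If the extension of `a` to `𝓞 L` divides `(ζ - 1)`, then
taking norms yields `N(a)^{φ(p)/2} ∣ p`; in particular no such `p ∈ {2,3,5,7}` exists. -/
theorem no_small_root_of_unity_eigenvalue (p : ℕ) (hp : p.Prime)
    (K L : Type*) [Field K] [NumberField K] [Field L] [NumberField L] [Algebra K L]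
    (hdeg : Module.finrank ℚ K = 2) (himag : ∀ _ : K →+* ℝ, False)
    (hL : Module.finrank K L = (p - 1) / 2)
    (ζ : 𝓞 L) (hζ : IsPrimitiveRoot ζ p)
    (a : Ideal (𝓞 K)) (ha : a ≠ ⊥) (hN : 3 < Ideal.absNorm a)
    (hcoprime : ∃ m : ℤ, Odd m ∧ ∀ k : ℤ, (k : 𝓞 K) ∈ a ↔ m ∣ k)
    (hdvd : Ideal.map (algebraMap (𝓞 K) (𝓞 L)) a ∣ Ideal.span {ζ - 1}) :
    Ideal.absNorm a ^ ((p - 1) / 2) ∣ p ∧ p ∉ ({2, 3, 5, 7} : Set ℕ) := by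
  -- first, `p = 2` is impossible since then `[L : K] = 0`
  have hp2 : p ≠ 2 := by
    intro h
    subst h
    rw [show (2 - 1) / 2 = 0 from rfl] at hL
    exact Module.finrank_pos.ne' hL
  have hodd : Odd p := hp.odd_of_ne_two hp2
  have hp3 : 3 ≤ p := by
    rcases hp.two_le.lt_or_eq with h | h
    · omega
    · omega
  have h2d : 2 ∣ p - 1 := by
    obtain ⟨k, hk⟩ := hodd
    omega
  -- the degree of L over ℚ
  have hrank : Module.finrank ℚ L = p - 1 := by
    have := Module.finrank_mul_finrank ℚ K L
    rw [hdeg, hL] at this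
    omega
  -- ζ as an element of L
  set ζL : L := algebraMap (𝓞 L) L ζ with hζLdef
  have hζL : IsPrimitiveRoot ζL p :=
    hζ.map_of_injective (NumberField.RingOfIntegers.coe_injective)
  -- L is the p-th cyclotomic field
  haveI : Fact p.Prime := ⟨hp⟩
  set p' : ℕ+ := ⟨p, hp.pos⟩ with hp'def
  have hccoe : ((p' : ℕ+) : ℕ) = p := rfl
  haveI hcyc : IsCyclotomicExtension {(p' : ℕ)} ℚ L := by
    rw [IsCyclotomicExtension.iff_adjoin_eq_top]
    constructor
    · intro n hn _
      rw [Set.mem_singleton_iff] at hn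
      subst hn
      exact ⟨ζL, hζL⟩
    · -- adjoin of roots of unity is everything, by a dimension count
      have hint : IsIntegral ℚ ζL := IsAlgebraic.isIntegral (Algebra.IsAlgebraic.isAlgebraic _)
      have hfr : Module.finrank ℚ ℚ⟮ζL⟯ = p - 1 := by
        rw [IntermediateField.adjoin.finrank hint,
          ← Polynomial.cyclotomic_eq_minpoly_rat hζL hp.pos,
          Polynomial.natDegree_cyclotomic, Nat.totient_prime hp]
      have htop : ℚ⟮ζL⟯ = ⊤ :=
        IntermediateField.eq_of_le_of_finrank_le le_top
          (by rw [IntermediateField.finrank_top', hfr, hrank])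
      have hsub : Algebra.adjoin ℚ {ζL} = ⊤ := by
        have := congrArg IntermediateField.toSubalgebra htop
        rwa [IntermediateField.adjoin_simple_toSubalgebra_of_isAlgebraic hint.isAlgebraic,
          IntermediateField.top_toSubalgebra] at this
      rw [eq_top_iff, ← hsub]
      refine Algebra.adjoin_mono ?_
      rintro x hx
      rw [Set.mem_singleton_iff] at hx
      subst hx
      exact ⟨p', Set.mem_singleton _, hp.ne_zero, hζL.pow_eq_one⟩
  haveI : Fact (Nat.Prime (p' : ℕ)) := ⟨hp⟩
  -- norm computation
  have hirr : Irreducible (Polynomial.cyclotomic (p' : ℕ) ℚ) :=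
    Polynomial.cyclotomic.irreducible_rat hp.pos
  have hp'2 : p' ≠ 2 := by
    intro h
    apply hp2
    have := congrArg (fun n : ℕ+ => (n : ℕ)) h
    exact this
  have hnormQ : Algebra.norm ℚ (ζL - 1) = p := by
    have := IsPrimitiveRoot.norm_sub_one_of_prime_ne_two' (p := p') (K := ℚ) (L := L)
      (by simpa [hccoe] using hζL) hirr hp2
    exact this
  have hnormZ : Algebra.norm ℤ (ζ - 1) = (p : ℤ) := by
    have h1 : ((Algebra.norm ℤ (ζ - 1) : ℤ) : ℚ) = Algebra.norm ℚ ((ζ - 1 : 𝓞 L) : L) :=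
      Algebra.coe_norm_int (ζ - 1)
    have h2 : ((ζ - 1 : 𝓞 L) : L) = ζL - 1 := by
      push_cast
      rfl
    rw [h2, hnormQ] at h1
    exact_mod_cast h1
  have hnormspan : Ideal.absNorm (Ideal.span {ζ - 1}) = p := by
    rw [Ideal.absNorm_span_singleton, hnormZ]
    simp
  -- the divisibility
  have hkey : Ideal.absNorm a ^ ((p - 1) / 2) ∣ p := by
    have h1 : Ideal.absNorm (Ideal.map (algebraMap (𝓞 K) (𝓞 L)) a) ∣
        Ideal.absNorm (Ideal.span {ζ - 1}) :=
      Ideal.absNorm_dvd_absNorm_of_le (Ideal.le_of_dvd hdvd)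
    rw [hnormspan, absNorm_map_algebraMap_ringOfIntegers K L a, hL] at h1
    exact h1
  refine ⟨hkey, ?_⟩
  -- no small p
  intro hmem
  have hle : Ideal.absNorm a ^ ((p - 1) / 2) ≤ p := Nat.le_of_dvd hp.pos hkey
  have h4 : 4 ≤ Ideal.absNorm a := hN
  have h4le : 4 ^ ((p - 1) / 2) ≤ Ideal.absNorm a ^ ((p - 1) / 2) :=
    Nat.pow_le_pow_left h4 _
  simp only [Set.mem_insert_iff, Set.mem_singleton_iff] at hmem
  rcases hmem with rfl | rfl | rfl | rfl
  · exact hp2 rfl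
  · norm_num at hle h4le; omega
  · norm_num at hle h4le; omega
  · norm_num at hle h4le; omega
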